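/- arXiv:math/0409545 — 2 statements merged into one kernel-verified Lean document; each statement's English description precedes it below -/
import Mathlib

section
/- Assume in addition that ν is finite and nonzero, and let p̄ be the unique solution in (max(p̲,−1), ∞) of Φ(q) = (q+1)Φ′(q). Then for every γ > 1 and every q with max(p̲,−1) < q < p̄, there exists α ∈ (1, γ) such that Φ(α(q+1) − 1) > α Φ(q). -/
open MeasureTheory Real Set Filter
open Topology
open scoped ENNReal NNReal
set_option maxHeartbeats 1000000

noncomputable section

/-- Real power with the convention `0 ^ r = 0` for every exponent `r`. -/
def pw (x r : ℝ) : ℝ := if x = 0 then 0 else x ^ r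

/-- The state space `S` of ranked mass configurations: nonincreasing nonnegative
sequences with total sum at most `1` (sum condition stated via partial sums). -/
def inS (s : ℕ → ℝ) : Prop :=
  (∀ i, 0 ≤ s i) ∧ (∀ i, s (i + 1) ≤ s i) ∧ ∀ F : Finset ℕ, ∑ i ∈ F, s i ≤ 1

/-- The configuration `(1, 0, 0, …)`. -/
def oneConf : ℕ → ℝ := fun i => if i = 0 then 1 else 0

/-- A dislocation measure: a measure on sequences, carried by `S`, giving no mass
to `(1,0,…)`, integrating `1 - s₁`, and conserving total mass (carried by
configurations with `Σ sᵢ = 1`). -/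
structure IsDislocation (ν : Measure (ℕ → ℝ)) : Prop where
  carried : ν {s | ¬ (inS s ∧ HasSum s 1)} = 0
  no_one : ν {oneConf} = 0
  int_one_sub : ∫⁻ s, ENNReal.ofReal (1 - s 0) ∂ν < ⊤

/-- `p̲ := inf {p ∈ ℝ : ∫_S Σ_{i≥2} sᵢ^{p+1} ν(ds) < ∞}`, as an extended real
(possibly `-∞`, and `+∞` if no `p` qualifies). -/
def pLow (ν : Measure (ℕ → ℝ)) : EReal :=
  sInf {x : EReal | ∃ p : ℝ, x = (p : EReal) ∧
    ∫⁻ s, ∑' i, ENNReal.ofReal (pw (s (i + 1)) (p + 1)) ∂ν < ⊤}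

/-- `Φ(q) := ∫_S (1 - Σ_{i≥1} sᵢ^{q+1}) ν(ds)`. -/
def Phi (ν : Measure (ℕ → ℝ)) (q : ℝ) : ℝ :=
  ∫ s, (1 - ∑' i, pw (s i) (q + 1)) ∂ν

lemma pw_zero (r : ℝ) : pw 0 r = 0 := if_pos rfl

lemma pw_of_pos {x : ℝ} (hx : 0 < x) (r : ℝ) : pw x r = x ^ r := if_neg hx.ne'

lemma pw_nonneg {x : ℝ} (hx : 0 ≤ x) (r : ℝ) : 0 ≤ pw x r := by
  rcases eq_or_lt_of_le hx with h | h
  · simp [← h, pw_zero]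
  · rw [pw_of_pos h]; exact Real.rpow_nonneg hx r

lemma pw_le_one {t r : ℝ} (h0 : 0 ≤ t) (h1 : t ≤ 1) (hr : 0 ≤ r) : pw t r ≤ 1 := by
  rcases eq_or_lt_of_le h0 with h | h
  · simp [← h, pw_zero]
  · rw [pw_of_pos h]; exact Real.rpow_le_one h0 h1 hr

lemma pw_le_pw {t a b : ℝ} (h0 : 0 ≤ t) (h1 : t ≤ 1) (hab : a ≤ b) : pw t b ≤ pw t a := by
  rcases eq_or_lt_of_le h0 with h | h
  · simp [← h, pw_zero]
  · rw [pw_of_pos h, pw_of_pos h]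
    exact Real.rpow_le_rpow_of_exponent_ge h h1 hab

lemma neg_log_nonneg {t : ℝ} (h0 : 0 ≤ t) (h1 : t ≤ 1) : 0 ≤ -Real.log t :=
  neg_nonneg.2 (Real.log_nonpos h0 h1)

lemma pw_log_bound {t θ δ : ℝ} (h0 : 0 ≤ t) (hδ : 0 < δ) :
    pw t θ * -Real.log t ≤ δ⁻¹ * pw t (θ - δ) := by
  rcases eq_or_lt_of_le h0 with h | h
  · simp [← h, pw_zero]
  · rw [pw_of_pos h, pw_of_pos h]
    have h1 : -Real.log t ≤ δ⁻¹ * t ^ (-δ) := by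
      have hl : Real.log (t ^ (-δ)) ≤ t ^ (-δ) - 1 :=
        Real.log_le_sub_one_of_pos (Real.rpow_pos_of_pos h _)
      rw [Real.log_rpow h] at hl
      rw [inv_mul_eq_div, le_div_iff₀ hδ]
      nlinarith [Real.rpow_pos_of_pos h (-δ)]
    calc t ^ θ * -Real.log t ≤ t ^ θ * (δ⁻¹ * t ^ (-δ)) :=
          mul_le_mul_of_nonneg_left h1 (Real.rpow_nonneg h0 θ)
      _ = δ⁻¹ * t ^ (θ - δ) := by
          rw [show θ - δ = θ + -δ by ring, Real.rpow_add h]; ring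

lemma pw_diff_ge {t a b : ℝ} (h0 : 0 ≤ t) :
    (b - a) * (pw t b * -Real.log t) ≤ pw t a - pw t b := by
  rcases eq_or_lt_of_le h0 with h | h
  · simp [← h, pw_zero]
  · rw [pw_of_pos h, pw_of_pos h]
    have h1 : Real.log t * (a - b) + 1 ≤ Real.exp (Real.log t * (a - b)) :=
      Real.add_one_le_exp _
    have h2 : (0:ℝ) ≤ t ^ b := Real.rpow_nonneg h0 b
    have h3 : t ^ a = t ^ b * Real.exp (Real.log t * (a - b)) := by
      rw [← Real.rpow_def_of_pos h, ← Real.rpow_add h]; ring_nf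
    nlinarith [mul_le_mul_of_nonneg_left h1 h2]

lemma summable_of_tsum_ofReal_ne_top {g : ℕ → ℝ} (hg : ∀ i, 0 ≤ g i)
    (h : ∑' i, ENNReal.ofReal (g i) ≠ ⊤) : Summable g := by
  have h' : ∑' i, (Real.toNNReal (g i) : ℝ≥0∞) ≠ ⊤ := by
    simpa [ENNReal.ofReal] using h
  have hs : Summable fun i => Real.toNNReal (g i) := ENNReal.tsum_coe_ne_top_iff_summable.1 h'
  have := NNReal.summable_coe.2 hs
  simpa [Real.coe_toNNReal _ (hg _)] using this

lemma tsum_toReal {g : ℕ → ℝ} (hg : ∀ i, 0 ≤ g i) :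
    ∑' i, g i = (∑' i, ENNReal.ofReal (g i)).toReal := by
  by_cases h : Summable g
  · rw [← ENNReal.ofReal_tsum_of_nonneg hg h, ENNReal.toReal_ofReal (tsum_nonneg hg)]
  · rw [tsum_eq_zero_of_not_summable h]
    have ht : ∑' i, ENNReal.ofReal (g i) = ⊤ := by
      by_contra h'
      exact h (summable_of_tsum_ofReal_ne_top hg h')
    simp [ht]

/-- A measurable surrogate for `pw`, agreeing with it on nonnegative arguments. -/
def mpw (x r : ℝ) : ℝ := if x ≤ 0 then 0 else Real.exp (Real.log x * r)

lemma measurable_mpw (r : ℝ) : Measurable fun x : ℝ => mpw x r := by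
  unfold mpw
  exact Measurable.ite measurableSet_Iic measurable_const
    (Real.measurable_exp.comp (Real.measurable_log.mul_const r))

lemma mpw_eq_pw {x : ℝ} (hx : 0 ≤ x) (r : ℝ) : mpw x r = pw x r := by
  rcases eq_or_lt_of_le hx with h | h
  · simp [← h, mpw, pw_zero]
  · rw [pw_of_pos h, mpw, if_neg (not_le.2 h), Real.rpow_def_of_pos h]


section Summ
variable {s : ℕ → ℝ} (hs : ∀ i, 0 ≤ s i ∧ s i ≤ 1) {p : ℝ}
  (hsum : Summable fun i => pw (s (i+1)) (p+1))

include hs hsum in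
lemma summable_pw {x : ℝ} (hpx : p < x) : Summable fun i => pw (s i) (x+1) := by
  refine (summable_nat_add_iff 1).mp ?_
  refine Summable.of_nonneg_of_le (fun n => pw_nonneg (hs (n+1)).1 _)
    (fun n => pw_le_pw (hs (n+1)).1 (hs (n+1)).2 (by linarith)) hsum

include hs hsum in
lemma term_pwlog_le {x a : ℝ} (hpa : p < a) (h1a : -1 < a) (hx : a < x) :
    (∀ i, pw (s (i+1)) (x+1) * -Real.log (s (i+1)) ≤ (a-p)⁻¹ * pw (s (i+1)) (p+1)) ∧
    pw (s 0) (x+1) * -Real.log (s 0) ≤ (a+1)⁻¹ := by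
  constructor
  · intro i
    calc pw (s (i+1)) (x+1) * -Real.log (s (i+1))
        ≤ (a-p)⁻¹ * pw (s (i+1)) (x+1-(a-p)) := pw_log_bound (hs (i+1)).1 (by linarith)
      _ ≤ (a-p)⁻¹ * pw (s (i+1)) (p+1) := by
          refine mul_le_mul_of_nonneg_left ?_ (inv_nonneg.2 (by linarith))
          exact pw_le_pw (hs (i+1)).1 (hs (i+1)).2 (by linarith)
  · calc pw (s 0) (x+1) * -Real.log (s 0)
        ≤ (a+1)⁻¹ * pw (s 0) (x+1-(a+1)) := pw_log_bound (hs 0).1 (by linarith)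
      _ ≤ (a+1)⁻¹ * 1 := by
          refine mul_le_mul_of_nonneg_left ?_ (inv_nonneg.2 (by linarith))
          exact pw_le_one (hs 0).1 (hs 0).2 (by linarith)
      _ = (a+1)⁻¹ := mul_one _

include hs hsum in
lemma summable_pwlog {x a : ℝ} (hpa : p < a) (h1a : -1 < a) (hx : a < x) :
    Summable fun i => pw (s i) (x+1) * -Real.log (s i) := by
  refine (summable_nat_add_iff 1).mp ?_
  refine Summable.of_nonneg_of_le
    (fun n => mul_nonneg (pw_nonneg (hs (n+1)).1 _) (neg_log_nonneg (hs (n+1)).1 (hs (n+1)).2))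
    (fun n => (term_pwlog_le hs hsum hpa h1a hx).1 n) (hsum.mul_left _)

include hs hsum in
lemma tsum_pwlog_le {x a : ℝ} (hpa : p < a) (h1a : -1 < a) (hx : a < x) :
    ∑' i, pw (s i) (x+1) * -Real.log (s i)
      ≤ (a+1)⁻¹ + (a-p)⁻¹ * ∑' i, pw (s (i+1)) (p+1) := by
  rw [Summable.tsum_eq_zero_add (summable_pwlog hs hsum hpa h1a hx)]
  have h1 : ∑' i, pw (s (i+1)) (x+1) * -Real.log (s (i+1))
      ≤ (a-p)⁻¹ * ∑' i, pw (s (i+1)) (p+1) := by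
    rw [← tsum_mul_left]
    exact Summable.tsum_le_tsum (fun i => (term_pwlog_le hs hsum hpa h1a hx).1 i)
      ((summable_nat_add_iff 1).mpr (summable_pwlog hs hsum hpa h1a hx))
      (hsum.mul_left _)
  have h2 := (term_pwlog_le hs hsum hpa h1a hx).2
  exact add_le_add h2 h1

include hs hsum in
lemma tsum_pw_hasDeriv {x a : ℝ} (hpa : p < a) (h1a : -1 < a) (hx : a < x) :
    HasDerivAt (fun y => ∑' i, pw (s i) (y+1))
      (-∑' i, pw (s i) (x+1) * -Real.log (s i)) x := by
  have key : HasDerivAt (fun y => ∑' i, pw (s i) (y+1))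
      (∑' i, pw (s i) (x+1) * Real.log (s i)) x := by
    set u : ℕ → ℝ := fun i => Nat.casesOn i ((a+1)⁻¹) fun j => (a-p)⁻¹ * pw (s (j+1)) (p+1)
      with hu
    have hus : Summable u := (summable_nat_add_iff 1).mp (hsum.mul_left _)
    refine hasDerivAt_tsum_of_isPreconnected (u := u)
      (g := fun n y => pw (s n) (y+1)) (g' := fun n y => pw (s n) (y+1) * Real.log (s n))
      (t := Ioi a) (y₀ := x) (y := x) hus isOpen_Ioi isPreconnected_Ioi
      (fun n y hy => ?_) (fun n y hy => ?_) hx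
      (summable_pw hs hsum (lt_trans hpa hx)) hx
    · -- pointwise derivative
      show HasDerivAt (fun y => pw (s n) (y+1)) (pw (s n) (y+1) * Real.log (s n)) y
      rcases eq_or_lt_of_le (hs n).1 with h | h
      · have h0 : s n = 0 := h.symm
        have : (fun y : ℝ => pw (s n) (y+1)) = fun _ => (0:ℝ) := by
          funext y; rw [h0, pw_zero]
        rw [show pw (s n) (y+1) * Real.log (s n) = 0 by rw [h0, pw_zero]; ring, this]
        exact hasDerivAt_const _ _
      · have hrw : ∀ z : ℝ, pw (s n) z = (s n) ^ z := fun z => pw_of_pos h z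
        have hd : HasDerivAt (fun y : ℝ => (s n) ^ (y+1))
            ((s n) ^ (y+1) * Real.log (s n) * 1) y :=
          ((Real.hasStrictDerivAt_const_rpow h (y+1)).hasDerivAt).comp y
            ((hasDerivAt_id y).add_const 1)
        simp only [mul_one] at hd
        simpa only [hrw] using hd
    · -- bounds
      show ‖pw (s n) (y+1) * Real.log (s n)‖ ≤ u n
      rcases n with _ | j
      · simpa [hu, norm_mul, abs_of_nonneg (pw_nonneg (hs 0).1 (y+1)),
          abs_of_nonpos (Real.log_nonpos (hs 0).1 (hs 0).2)] using
          (term_pwlog_le hs hsum hpa h1a hy).2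
      · have := (term_pwlog_le hs hsum hpa h1a hy).1 j
        simpa [hu, norm_mul, abs_of_nonneg (pw_nonneg (hs (j+1)).1 (y+1)),
          abs_of_nonpos (Real.log_nonpos (hs (j+1)).1 (hs (j+1)).2)] using this
  have : (∑' i, pw (s i) (x+1) * Real.log (s i))
      = -∑' i, pw (s i) (x+1) * -Real.log (s i) := by
    rw [← tsum_neg]; congr 1; funext i; ring
  rwa [this] at key
end Summ


-- new part
lemma aesm_tsum {α : Type*} [MeasurableSpace α] {ν : Measure α} {f g : ℕ → α → ℝ}
    (hg : ∀ i, Measurable (g i)) (h0 : ∀ᵐ s ∂ν, ∀ i, 0 ≤ f i s ∧ f i s = g i s) :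
    AEStronglyMeasurable (fun s => ∑' i, f i s) ν := by
  refine ⟨fun s => (∑' i, ENNReal.ofReal (g i s)).toReal,
    (Measurable.ennreal_tsum fun i => (hg i).ennreal_ofReal).ennreal_toReal.stronglyMeasurable,
    ?_⟩
  filter_upwards [h0] with s h0s
  rw [tsum_toReal (fun i => (h0s i).1)]
  congr 1
  exact tsum_congr fun i => by rw [(h0s i).2]

section Meas
variable {ν : Measure (ℕ → ℝ)} [IsFiniteMeasure ν]
  (hS : ∀ᵐ s ∂ν, ∀ i, 0 ≤ s i ∧ s i ≤ 1)

include hS in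
lemma aesm_head (r : ℝ) : AEStronglyMeasurable (fun s : ℕ → ℝ => ∑' i, pw (s i) r) ν := by
  refine aesm_tsum (g := fun i s => mpw (s i) r)
    (fun i => (measurable_mpw r).comp (measurable_pi_apply i)) ?_
  filter_upwards [hS] with s hs i
  exact ⟨pw_nonneg (hs i).1 r, (mpw_eq_pw (hs i).1 r).symm⟩

include hS in
lemma aesm_tail (r : ℝ) : AEStronglyMeasurable (fun s : ℕ → ℝ => ∑' i, pw (s (i+1)) r) ν := by
  refine aesm_tsum (g := fun i s => mpw (s (i+1)) r)
    (fun i => (measurable_mpw r).comp (measurable_pi_apply (i+1))) ?_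
  filter_upwards [hS] with s hs i
  exact ⟨pw_nonneg (hs (i+1)).1 r, (mpw_eq_pw (hs (i+1)).1 r).symm⟩

include hS in
lemma aesm_log (r : ℝ) :
    AEStronglyMeasurable (fun s : ℕ → ℝ => ∑' i, pw (s i) r * -Real.log (s i)) ν := by
  refine aesm_tsum (g := fun i s => mpw (s i) r * -Real.log (s i))
    (fun i => ((measurable_mpw r).comp (measurable_pi_apply i)).mul
      ((Real.measurable_log.comp (measurable_pi_apply i)).neg)) ?_
  filter_upwards [hS] with s hs i
  refine ⟨mul_nonneg (pw_nonneg (hs i).1 r) (neg_log_nonneg (hs i).1 (hs i).2), ?_⟩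
  rw [mpw_eq_pw (hs i).1 r]

include hS in
lemma good_ae {p : ℝ}
    (hp : ∫⁻ s, ∑' i, ENNReal.ofReal (pw (s (i+1)) (p+1)) ∂ν ≠ ⊤) :
    ∀ᵐ s ∂ν, (∀ i, 0 ≤ s i ∧ s i ≤ 1) ∧ Summable fun i => pw (s (i+1)) (p+1) := by
  have hm : AEMeasurable (fun s : ℕ → ℝ => ∑' i, ENNReal.ofReal (pw (s (i+1)) (p+1))) ν := by
    refine ⟨fun s => ∑' i, ENNReal.ofReal (mpw (s (i+1)) (p+1)),
      Measurable.ennreal_tsum fun i =>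
        ((measurable_mpw (p+1)).comp (measurable_pi_apply (i+1))).ennreal_ofReal, ?_⟩
    filter_upwards [hS] with s hs
    exact tsum_congr fun i => by rw [mpw_eq_pw (hs (i+1)).1]
  have hfin := ae_lt_top' hm hp
  filter_upwards [hS, hfin] with s hs hf
  refine ⟨hs, summable_of_tsum_ofReal_ne_top (fun i => pw_nonneg (hs (i+1)).1 _) hf.ne⟩

include hS in
lemma integrable_tail {p : ℝ}
    (hp : ∫⁻ s, ∑' i, ENNReal.ofReal (pw (s (i+1)) (p+1)) ∂ν ≠ ⊤) :
    Integrable (fun s : ℕ → ℝ => ∑' i, pw (s (i+1)) (p+1)) ν := by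
  refine ⟨aesm_tail hS _, ?_⟩
  rw [HasFiniteIntegral]
  have : ∫⁻ s, ‖∑' i, pw (s (i+1)) (p+1)‖ₑ ∂ν
      = ∫⁻ s, ∑' i, ENNReal.ofReal (pw (s (i+1)) (p+1)) ∂ν := by
    refine lintegral_congr_ae ?_
    filter_upwards [good_ae hS hp] with s hgood
    rw [Real.enorm_eq_ofReal (tsum_nonneg fun i => pw_nonneg (hgood.1 (i+1)).1 _),
      ENNReal.ofReal_tsum_of_nonneg (fun i => pw_nonneg (hgood.1 (i+1)).1 _) hgood.2]
  rw [this]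
  exact hp.lt_top

include hS in
lemma integrable_F {p : ℝ}
    (hp : ∫⁻ s, ∑' i, ENNReal.ofReal (pw (s (i+1)) (p+1)) ∂ν ≠ ⊤)
    {q : ℝ} (hpq : p < q) (h1q : -1 < q) :
    Integrable (fun s : ℕ → ℝ => 1 - ∑' i, pw (s i) (q+1)) ν := by
  refine Integrable.mono' ((integrable_const (2:ℝ)).add (integrable_tail hS hp))
    ((aestronglyMeasurable_const).sub (aesm_head hS _)) ?_
  filter_upwards [good_ae hS hp] with s hgood
  have hsm := summable_pw hgood.1 hgood.2 hpq
  have hT0 : 0 ≤ ∑' i, pw (s i) (q+1) := tsum_nonneg fun i => pw_nonneg (hgood.1 i).1 _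
  have hTle : ∑' i, pw (s i) (q+1) ≤ 1 + ∑' i, pw (s (i+1)) (p+1) := by
    rw [Summable.tsum_eq_zero_add hsm]
    refine add_le_add (pw_le_one (hgood.1 0).1 (hgood.1 0).2 (by linarith)) ?_
    exact Summable.tsum_le_tsum
      (fun i => pw_le_pw (hgood.1 (i+1)).1 (hgood.1 (i+1)).2 (by linarith))
      ((summable_nat_add_iff 1).mpr hsm) hgood.2
  have hTail0 : 0 ≤ ∑' i, pw (s (i+1)) (p+1) :=
    tsum_nonneg fun i => pw_nonneg (hgood.1 (i+1)).1 _
  rw [Real.norm_eq_abs, abs_le]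
  constructor <;> simp only [Pi.add_apply] <;> linarith
end Meas


section Meas
variable {ν : Measure (ℕ → ℝ)} [IsFiniteMeasure ν]
  (hS : ∀ᵐ s ∂ν, ∀ i, 0 ≤ s i ∧ s i ≤ 1)

def DD (ν : Measure (ℕ → ℝ)) (q : ℝ) : ℝ :=
  ∫ s, ∑' i, pw (s i) (q+1) * -Real.log (s i) ∂ν

include hS in
lemma phi_deriv {p : ℝ}
    (hp : ∫⁻ s, ∑' i, ENNReal.ofReal (pw (s (i+1)) (p+1)) ∂ν ≠ ⊤)
    {q : ℝ} (hpq : p < q) (h1q : -1 < q) :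
    Integrable (fun s : ℕ → ℝ => ∑' i, pw (s i) (q+1) * -Real.log (s i)) ν ∧
    HasDerivAt (Phi ν) (DD ν q) q := by
  set m := max p (-1) with hm
  have hmq : m < q := max_lt hpq h1q
  set a := (m + q)/2 with ha
  have hma : m < a := by rw [ha]; linarith
  have hpa : p < a := lt_of_le_of_lt (le_max_left _ _) hma
  have h1a : -1 < a := lt_of_le_of_lt (le_max_right _ _) hma
  have haq : a < q := by rw [ha]; linarith
  set ε := q - a with hε
  have hε0 : 0 < ε := by rw [hε]; linarith
  have hball : ∀ x ∈ Metric.ball q ε, a < x := by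
    intro x hx
    rw [Metric.mem_ball, Real.dist_eq, abs_lt] at hx
    linarith [hx.1]
  have key := hasDerivAt_integral_of_dominated_loc_of_deriv_le
    (μ := ν) (x₀ := q)
    (F := fun x s => 1 - ∑' i, pw (s i) (x+1))
    (F' := fun x s => ∑' i, pw (s i) (x+1) * -Real.log (s i))
    (bound := fun s => (a+1)⁻¹ + (a-p)⁻¹ * ∑' i, pw (s (i+1)) (p+1))
    (Metric.ball_mem_nhds q hε0)
    (Eventually.of_forall fun x => (aestronglyMeasurable_const).sub (aesm_head hS (x+1)))
    (integrable_F hS hp hpq h1q)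
    (aesm_log hS (q+1))
    ?_ ?_ ?_
  · exact ⟨key.1, key.2⟩
  · -- bound
    filter_upwards [good_ae hS hp] with s hgood x hx
    have h0 : 0 ≤ ∑' i, pw (s i) (x+1) * -Real.log (s i) :=
      tsum_nonneg fun i => mul_nonneg (pw_nonneg (hgood.1 i).1 _)
        (neg_log_nonneg (hgood.1 i).1 (hgood.1 i).2)
    rw [Real.norm_eq_abs, abs_of_nonneg h0]
    exact tsum_pwlog_le hgood.1 hgood.2 hpa h1a (hball x hx)
  · exact (integrable_const _).add ((integrable_tail hS hp).const_mul _)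
  · -- differentiability
    filter_upwards [good_ae hS hp] with s hgood x hx
    have hd := tsum_pw_hasDeriv hgood.1 hgood.2 hpa h1a (hball x hx)
    have := hd.const_sub 1
    simpa using this

include hS in
lemma DD_anti {p : ℝ}
    (hp : ∫⁻ s, ∑' i, ENNReal.ofReal (pw (s (i+1)) (p+1)) ∂ν ≠ ⊤)
    {q1 q2 : ℝ} (hpq1 : p < q1) (h1q1 : -1 < q1) (h12 : q1 ≤ q2) :
    DD ν q2 ≤ DD ν q1 := by
  have hpq2 : p < q2 := lt_of_lt_of_le hpq1 h12
  have h1q2 : -1 < q2 := lt_of_lt_of_le h1q1 h12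
  have hi1 := (phi_deriv hS hp hpq1 h1q1).1
  have hi2 := (phi_deriv hS hp hpq2 h1q2).1
  refine integral_mono_ae hi2 hi1 ?_
  filter_upwards [good_ae hS hp] with s hgood
  set m := max p (-1) with hm
  have hmq : m < q1 := max_lt hpq1 h1q1
  set a := (m + q1)/2 with ha
  have hma : m < a := by rw [ha]; linarith
  have hpa : p < a := lt_of_le_of_lt (le_max_left _ _) hma
  have h1a : -1 < a := lt_of_le_of_lt (le_max_right _ _) hma
  have haq : a < q1 := by rw [ha]; linarith
  refine Summable.tsum_le_tsum (fun i => ?_)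
    (summable_pwlog hgood.1 hgood.2 hpa h1a (lt_of_lt_of_le haq h12))
    (summable_pwlog hgood.1 hgood.2 hpa h1a haq)
  exact mul_le_mul_of_nonneg_right
    (pw_le_pw (hgood.1 i).1 (hgood.1 i).2 (by linarith))
    (neg_log_nonneg (hgood.1 i).1 (hgood.1 i).2)

include hS in
lemma phi_concave {p : ℝ}
    (hp : ∫⁻ s, ∑' i, ENNReal.ofReal (pw (s (i+1)) (p+1)) ∂ν ≠ ⊤)
    {q1 q2 : ℝ} (hpq1 : p < q1) (h1q1 : -1 < q1) (h12 : q1 ≤ q2) :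
    (q2 - q1) * DD ν q2 ≤ Phi ν q2 - Phi ν q1 := by
  have hpq2 : p < q2 := lt_of_lt_of_le hpq1 h12
  have h1q2 : -1 < q2 := lt_of_lt_of_le h1q1 h12
  have hF1 := integrable_F hS hp hpq1 h1q1
  have hF2 := integrable_F hS hp hpq2 h1q2
  have hD2 := (phi_deriv hS hp hpq2 h1q2).1
  rw [Phi, Phi, ← integral_sub hF2 hF1]
  rw [show (q2 - q1) * DD ν q2
      = ∫ s, (q2 - q1) * ∑' i, pw (s i) (q2+1) * -Real.log (s i) ∂ν from
    (integral_const_mul _ _).symm]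
  refine integral_mono_ae (hD2.const_mul _) (hF2.sub hF1) ?_
  filter_upwards [good_ae hS hp] with s hgood
  have hsm1 := summable_pw hgood.1 hgood.2 hpq1
  have hsm2 := summable_pw hgood.1 hgood.2 hpq2
  set m := max p (-1) with hm
  have hmq : m < q1 := max_lt hpq1 h1q1
  set a := (m + q1)/2 with ha
  have hma : m < a := by rw [ha]; linarith
  have hpa : p < a := lt_of_le_of_lt (le_max_left _ _) hma
  have h1a : -1 < a := lt_of_le_of_lt (le_max_right _ _) hma
  have haq : a < q1 := by rw [ha]; linarith
  have hsl2 := summable_pwlog hgood.1 hgood.2 hpa h1a (lt_of_lt_of_le haq h12)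
  show (q2 - q1) * ∑' i, pw (s i) (q2+1) * -Real.log (s i)
      ≤ (1 - ∑' i, pw (s i) (q2+1)) - (1 - ∑' i, pw (s i) (q1+1))
  have heq : (1 - ∑' i, pw (s i) (q2+1)) - (1 - ∑' i, pw (s i) (q1+1))
      = ∑' i, (pw (s i) (q1+1) - pw (s i) (q2+1)) := by
    rw [Summable.tsum_sub hsm1 hsm2]; ring
  rw [heq, ← tsum_mul_left]
  refine Summable.tsum_le_tsum (fun i => ?_) (hsl2.mul_left _) (hsm1.sub hsm2)
  have h := pw_diff_ge (t := s i) (a := q1+1) (b := q2+1) (hgood.1 i).1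
  calc (q2 - q1) * (pw (s i) (q2+1) * -Real.log (s i))
      = ((q2+1) - (q1+1)) * (pw (s i) (q2+1) * -Real.log (s i)) := by ring
    _ ≤ pw (s i) (q1+1) - pw (s i) (q2+1) := h
end Meas


/-- Assume `ν` finite and nonzero, and let `p̄` be the unique solution in
`J := (max(p̲,-1), ∞)` of `Φ(q) = (q+1)Φ'(q)`. Then for every `γ > 1` and every
`q` with `max(p̲,-1) < q < p̄`, there exists `α ∈ (1, γ)` with
`Φ(α(q+1) - 1) > α Φ(q)` (i.e. `m(αθ) < m(θ)^α` for `θ = q+1`). -/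
theorem exists_alpha_supermultiplicative (ν : Measure (ℕ → ℝ))
    (hν : IsDislocation ν) [IsFiniteMeasure ν] (hν0 : ν ≠ 0) (pbar : ℝ)
    (hmem : -1 < pbar ∧ pLow ν < (pbar : EReal))
    (heq : Phi ν pbar = (pbar + 1) * deriv (Phi ν) pbar)
    (huniq : ∀ q : ℝ, -1 < q → pLow ν < (q : EReal) →
      Phi ν q = (q + 1) * deriv (Phi ν) q → q = pbar)
    (γ : ℝ) (hγ : 1 < γ) (q : ℝ) (hq1 : -1 < q) (hq2 : pLow ν < (q : EReal))
    (hq3 : q < pbar) :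
    ∃ α : ℝ, 1 < α ∧ α < γ ∧ α * Phi ν q < Phi ν (α * (q + 1) - 1) := by
  have hae : ∀ᵐ s ∂ν, inS s ∧ HasSum s 1 := ae_iff.2 hν.carried
  have hS : ∀ᵐ s ∂ν, ∀ i, 0 ≤ s i ∧ s i ≤ 1 := by
    filter_upwards [hae] with s hs i
    refine ⟨hs.1.1 i, ?_⟩
    have := hs.1.2.2 {i}
    simpa using this
  obtain ⟨x, ⟨p, rfl, hpfin⟩, hplt⟩ := sInf_lt_iff.1 hq2
  have hpq : p < q := by exact_mod_cast hplt
  have hp : ∫⁻ s, ∑' i, ENNReal.ofReal (pw (s (i+1)) (p+1)) ∂ν ≠ ⊤ := hpfin.ne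
  have hppbar : p < pbar := lt_trans hpq hq3
  obtain ⟨h1pbar, -⟩ := hmem
  have hdq := (phi_deriv hS hp hpq hq1).2
  have hdpbar := (phi_deriv hS hp hppbar h1pbar).2
  have hbar0 : (pbar + 1) * DD ν pbar - Phi ν pbar = 0 := by
    rw [heq, hdpbar.deriv]; ring
  have hanti : (pbar + 1) * DD ν pbar - Phi ν pbar ≤ (q + 1) * DD ν q - Phi ν q := by
    have hD := DD_anti hS hp hpq hq1 hq3.le
    have hC := phi_concave hS hp hpq hq1 hq3.le
    nlinarith [mul_le_mul_of_nonneg_left hD (by linarith : (0:ℝ) ≤ q + 1)]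
  have hne : (q + 1) * DD ν q - Phi ν q ≠ 0 := by
    intro h0
    have hPhiq : Phi ν q = (q + 1) * deriv (Phi ν) q := by rw [hdq.deriv]; linarith
    exact absurd (huniq q hq1 hq2 hPhiq) (ne_of_lt hq3)
  have hpos : 0 < (q + 1) * DD ν q - Phi ν q :=
    lt_of_le_of_ne (by linarith [hanti, hbar0.ge]) (Ne.symm hne)
  set G : ℝ → ℝ := fun α => Phi ν (α * (q+1) - 1) - α * Phi ν q with hGdef
  have hinner : HasDerivAt (fun α : ℝ => α * (q+1) - 1) (q+1) 1 := by
    simpa using ((hasDerivAt_id (1:ℝ)).mul_const (q+1)).sub_const 1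
  have he1 : (1:ℝ) * (q+1) - 1 = q := by ring
  have houter : HasDerivAt (Phi ν) (DD ν q) ((1:ℝ) * (q+1) - 1) := by rw [he1]; exact hdq
  have hcomp : HasDerivAt (fun α : ℝ => Phi ν (α * (q+1) - 1)) (DD ν q * (q+1)) 1 :=
    HasDerivAt.comp (h₂ := Phi ν) (h := fun α : ℝ => α * (q+1) - 1) 1 houter hinner
  have hGd : HasDerivAt G ((q+1) * DD ν q - Phi ν q) 1 := by
    have h := hcomp.sub (hasDerivAt_mul_const (Phi ν q))
    rw [hGdef]
    exact h.congr_deriv (by ring)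
  have hG1 : G 1 = 0 := by rw [hGdef]; simp only [he1]; ring
  rw [hasDerivAt_iff_tendsto_slope] at hGd
  have hev : ∀ᶠ α in 𝓝[≠] (1:ℝ), 0 < slope G 1 α := hGd.eventually (eventually_gt_nhds hpos)
  have hev' : ∀ᶠ α in 𝓝[>] (1:ℝ), 0 < slope G 1 α :=
    hev.filter_mono (nhdsWithin_mono 1 fun x hx => ne_of_gt hx)
  have hioo : ∀ᶠ α in 𝓝[>] (1:ℝ), α ∈ Ioo 1 γ :=
    Ioo_mem_nhdsGT_of_mem ⟨le_refl 1, hγ⟩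
  obtain ⟨α, hα, hαIoo⟩ := (hev'.and hioo).exists
  refine ⟨α, hαIoo.1, hαIoo.2, ?_⟩
  have hslope : 0 < (G α - G 1) / (α - 1) := by rwa [slope_def_field] at hα
  have h1α : 0 < α - 1 := by linarith [hαIoo.1]
  have hGα : 0 < G α := by
    rcases div_pos_iff.1 hslope with ⟨h1, h2⟩ | ⟨h1, h2⟩
    · linarith [hG1]
    · linarith
  have : 0 < Phi ν (α * (q+1) - 1) - α * Phi ν q := hGα
  linarith
end
end

section
/- Let Θ : [0,∞) → (open subsets of (0,1)) satisfy: (i) Θ(t′) ⊆ Θ(t) whenever t ≤ t′; (ii) for every t, the set (0,1) \ Θ(t) has Lebesgue measure zero; (iii) for every t₀ ≥ 0 and every x ∈ (0,1), the map t ↦ |I_x(t)| is right-continuous at t₀, where |I_x(t)| denotes the Lebesgue measure of the connected component of x in Θ(t) (equal to 0 if x ∉ Θ(t)). Let a ≤ q be nonzero real numbers and assume that for every t ≥ 0 the function x ↦ |I_x(t)|^a is integrable on (0,1) (with 0^a := 0). Then the function t ↦ ∫_0^1 |I_x(t)|^q dx is right-continuous on [0,∞). -/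
open MeasureTheory Set Filter
open scoped NNReal ENNReal Topology

noncomputable section

lemma pw_eq_rpow {r : ℝ} (hr : r ≠ 0) (y : ℝ) : pw y r = y ^ r := by
  unfold pw
  split_ifs with h
  · rw [h, Real.zero_rpow hr]
  · rfl

lemma measurable_pw (c : ℝ) : Measurable fun y : ℝ => pw y c := by
  unfold pw
  exact Measurable.ite (by simpa using measurableSet_singleton (0 : ℝ)) measurable_const
    (measurable_id.pow measurable_const)

lemma pw_pw {a : ℝ} (ha : a ≠ 0) {y : ℝ} (hy : 0 ≤ y) : pw (pw y a) (1 / a) = y := by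
  rcases eq_or_lt_of_le hy with h | h
  · simp [pw, ← h]
  · have h1 : pw y a = y ^ a := pw_eq_rpow ha y
    have h2 : (0 : ℝ) < y ^ a := Real.rpow_pos_of_pos h a
    rw [h1, pw_eq_rpow (one_div_ne_zero ha) _, ← Real.rpow_mul hy,
      mul_one_div_cancel ha, Real.rpow_one]

/-- Interval representation of a fragmentation: if `Θ(t)` is a nested family of
open subsets of `(0,1)` of full Lebesgue measure such that the length
`|I_x(t)|` of the component of each point `x` is right-continuous in `t`, and
if `x ↦ |I_x(t)|^a` is integrable for every `t` (where `a ≤ q` are nonzero),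
then `t ↦ ∫₀¹ |I_x(t)|^q dx` is right-continuous on `[0,∞)`. -/
theorem rightContinuous_integral_component_length (Θ : ℝ≥0 → Set ℝ)
    (hopen : ∀ t, IsOpen (Θ t)) (hsub : ∀ t, Θ t ⊆ Set.Ioo (0 : ℝ) 1)
    (hnested : ∀ t t' : ℝ≥0, t ≤ t' → Θ t' ⊆ Θ t)
    (hfull : ∀ t, volume (Set.Ioo (0 : ℝ) 1 \ Θ t) = 0)
    (hrc : ∀ (t₀ : ℝ≥0) (x : ℝ), ContinuousWithinAt
      (fun t => (volume (connectedComponentIn (Θ t) x)).toReal)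
      (Set.Ici t₀) t₀)
    (a q : ℝ) (ha : a ≠ 0) (hq : q ≠ 0) (haq : a ≤ q)
    (hint : ∀ t, IntegrableOn
      (fun x => pw (volume (connectedComponentIn (Θ t) x)).toReal a)
      (Set.Ioo (0 : ℝ) 1))
    (t₀ : ℝ≥0) :
    ContinuousWithinAt
      (fun t => ∫ x in Set.Ioo (0 : ℝ) 1,
        pw (volume (connectedComponentIn (Θ t) x)).toReal q)
      (Set.Ici t₀) t₀ := by
  set ℓ : ℝ≥0 → ℝ → ℝ := fun t x => (volume (connectedComponentIn (Θ t) x)).toReal with hℓ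
  set μ : Measure ℝ := volume.restrict (Set.Ioo (0 : ℝ) 1) with hμ
  -- basic facts about ℓ
  have hvol_lt : ∀ t x, volume (connectedComponentIn (Θ t) x) < ⊤ := by
    intro t x
    calc volume (connectedComponentIn (Θ t) x)
        ≤ volume (Set.Ioo (0 : ℝ) 1) :=
          measure_mono ((connectedComponentIn_subset _ _).trans (hsub t))
      _ < ⊤ := by simp [Real.volume_Ioo]
  have hℓ_nonneg : ∀ t x, 0 ≤ ℓ t x := fun t x => ENNReal.toReal_nonneg
  have hℓ_le_one : ∀ t x, ℓ t x ≤ 1 := by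
    intro t x
    have h1 : volume (connectedComponentIn (Θ t) x) ≤ volume (Set.Ioo (0 : ℝ) 1) :=
      measure_mono ((connectedComponentIn_subset _ _).trans (hsub t))
    have h2 := ENNReal.toReal_mono (by simp [Real.volume_Ioo] : volume (Set.Ioo (0:ℝ) 1) ≠ ⊤) h1
    simpa [Real.volume_Ioo] using h2
  have hℓ_mono : ∀ x, ∀ t t' : ℝ≥0, t ≤ t' → ℓ t' x ≤ ℓ t x := by
    intro x t t' htt'
    exact ENNReal.toReal_mono (hvol_lt t x).ne
      (measure_mono (connectedComponentIn_mono x (hnested t t' htt')))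
  have hℓ_pos : ∀ t x, x ∈ Θ t → 0 < ℓ t x := by
    intro t x hx
    refine ENNReal.toReal_pos ?_ (hvol_lt t x).ne
    exact ((hopen t).connectedComponentIn.measure_pos volume
      ⟨x, mem_connectedComponentIn hx⟩).ne'
  -- a.e. membership in Θ t
  have hmem : ∀ t, ∀ᵐ x ∂μ, x ∈ Θ t := by
    intro t
    rw [hμ, ae_restrict_iff' measurableSet_Ioo]
    rw [ae_iff]
    refine measure_mono_null ?_ (hfull t)
    intro x hx
    simp only [Set.mem_setOf_eq, Classical.not_imp] at hx
    exact ⟨hx.1, hx.2⟩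
  -- measurability
  have haem : ∀ t, AEMeasurable (ℓ t) μ := by
    intro t
    have h1 : AEMeasurable (fun x => pw (ℓ t x) a) μ :=
      (hint t).aestronglyMeasurable.aemeasurable
    have h2 : AEMeasurable (fun x => pw (pw (ℓ t x) a) (1 / a)) μ :=
      (measurable_pw (1 / a)).comp_aemeasurable h1
    have h3 : (fun x => pw (pw (ℓ t x) a) (1 / a)) = ℓ t :=
      funext fun x => pw_pw ha (hℓ_nonneg t x)
    rwa [h3] at h2
  have hmeasq : ∀ t, AEStronglyMeasurable (fun x => pw (ℓ t x) q) μ := fun t =>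
    ((measurable_pw q).comp_aemeasurable (haem t)).aestronglyMeasurable
  -- the dominated convergence argument
  have ht01 : t₀ < t₀ + 1 := lt_add_of_pos_right t₀ one_pos
  refine MeasureTheory.tendsto_integral_filter_of_dominated_convergence
    (fun x => 1 + pw (ℓ (t₀ + 1) x) a)
    (Eventually.of_forall hmeasq) ?_ ?_ ?_
  · -- bound
    have hev : ∀ᶠ t in 𝓝[Set.Ici t₀] t₀, t ≤ t₀ + 1 :=
      Eventually.filter_mono nhdsWithin_le_nhds (eventually_le_nhds ht01)
    filter_upwards [hev] with t ht
    filter_upwards [hmem (t₀ + 1)] with x hx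
    have hℓ1 : 0 < ℓ (t₀ + 1) x := hℓ_pos _ x hx
    have hℓt1 : ℓ (t₀ + 1) x ≤ ℓ t x := hℓ_mono x t (t₀ + 1) ht
    have hℓtpos : 0 < ℓ t x := lt_of_lt_of_le hℓ1 hℓt1
    have hpwa : pw (ℓ (t₀ + 1) x) a = ℓ (t₀ + 1) x ^ a := pw_eq_rpow ha _
    have hpwq : pw (ℓ t x) q = ℓ t x ^ q := pw_eq_rpow hq _
    rw [hpwq, hpwa, Real.norm_eq_abs, abs_of_nonneg (Real.rpow_nonneg (hℓ_nonneg t x) q)]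
    have h1a : 0 ≤ ℓ (t₀ + 1) x ^ a := Real.rpow_nonneg (hℓ_nonneg _ x) a
    rcases lt_or_gt_of_ne hq with hqneg | hqpos
    · -- q < 0, so a ≤ q < 0
      have h1 : ℓ t x ^ q ≤ ℓ t x ^ a :=
        Real.rpow_le_rpow_of_exponent_ge hℓtpos (hℓ_le_one t x) haq
      have h2 : ℓ t x ^ a ≤ ℓ (t₀ + 1) x ^ a :=
        Real.rpow_le_rpow_of_nonpos hℓ1 hℓt1 (haq.trans hqneg.le)
      linarith
    · -- 0 < q
      have h1 : ℓ t x ^ q ≤ 1 :=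
        Real.rpow_le_one (hℓ_nonneg t x) (hℓ_le_one t x) hqpos.le
      linarith
  · -- bound integrable
    exact (integrableOn_const (by simp [Real.volume_Ioo])).add (hint (t₀ + 1))
  · -- a.e. pointwise convergence
    filter_upwards [hmem t₀] with x hx
    have hℓ0 : 0 < ℓ t₀ x := hℓ_pos t₀ x hx
    simp only [pw_eq_rpow hq]
    exact (hrc t₀ x).rpow_const (Or.inl hℓ0.ne')
end
end
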